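/- For every backoff-complete topology over Σ and every ε-companion distribution p, the induced distribution p* is a probability distribution at every state: for every q ∈ Q, Σ_{x∈L*[q]} p*(x|q) = 1. (In particular, every quantity d(q₀,q) appearing in the definition of p* satisfies d(q₀,q) ≥ ε > 0, so p* is well defined.) -/
import Mathlib


open scoped BigOperators
open Classical

noncomputable section

variable {α : Type*} {Q : Type*}

/-- A backoff-complete topology over the alphabet `α` with states `Q`. -/
structure BackoffTopology (α : Type*) (Q : Type*) where
  supp : Q → Finset α
  bo : Q → Option Q
  rank : Q → ℕ
  rank_lt : ∀ q q', bo q = some q' → rank q' < rank q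
  supp_sub : ∀ q q', bo q = some q' → supp q ⊆ supp q'
  supp_ssub : ∀ q q', bo q = some q' → bo q' = none → supp q ⊂ supp q'

namespace BackoffTopology

/-- `iter n q` is the `n`-th state of the backoff chain of `q` (if it exists). -/
def iter (T : BackoffTopology α Q) : ℕ → Q → Option Q
  | 0, q => some q
  | n + 1, q => (T.iter n q).bind T.bo

/-- `L*[q]`: union of the label sets along the backoff chain of `q`. -/
def suppStar (T : BackoffTopology α Q) (q : Q) : Set α :=
  {x | ∃ n q', T.iter n q = some q' ∧ x ∈ T.supp q'}

/-- `q^x`: the first state of the backoff chain of `q` whose label set contains `x`. -/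
def qx (T : BackoffTopology α Q) (q : Q) (x : α) : Option Q :=
  if h : ∃ n, ∃ q', T.iter n q = some q' ∧ x ∈ T.supp q'
  then T.iter (Nat.find h) q
  else none

/-- `B(q)`: states whose backoff chain contains `q`. -/
def B [Fintype Q] (T : BackoffTopology α Q) (q : Q) : Finset Q :=
  Finset.univ.filter fun qa => ∃ n, T.iter n qa = some q

/-- `B₁(q)`: states backing off to `q` in one step. -/
def B1 [Fintype Q] (T : BackoffTopology α Q) (q : Q) : Finset Q :=
  Finset.univ.filter fun q₀ => T.bo q₀ = some q

end BackoffTopology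

/-- An ε-companion distribution on a backoff-complete topology: `p q x` is `p(x|q)` and
`pphi q` is `p(φ|q)`. -/
structure Companion (T : BackoffTopology α Q) (ε : ℝ) where
  p : Q → α → ℝ
  pphi : Q → ℝ
  p_ge : ∀ q, ∀ x ∈ T.supp q, ε ≤ p q x
  pphi_ge : ∀ q q', T.bo q = some q' → ε ≤ pphi q
  pphi_none : ∀ q, T.bo q = none → pphi q = 0
  total : ∀ q, (∑ x ∈ T.supp q, p q x) + pphi q = 1

namespace Companion

variable {T : BackoffTopology α Q} {ε : ℝ}

/-- `d(q₀,q) = 1 − Σ_{x∈L[q₀]} p(x|q)`, for `bo q₀ = q`. -/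
def d (c : Companion T ε) (q₀ q : Q) : ℝ :=
  1 - ∑ x ∈ T.supp q₀, c.p q x

/-- `alphaN n q = α(q, q″)` where `q″` is the `n`-th state of the backoff chain of `q`:
the product of `p(φ|s)/d(s,bo(s))` over the first `n` states `s` of the chain. -/
def alphaN (c : Companion T ε) : ℕ → Q → ℝ
  | 0, _ => 1
  | n + 1, q =>
    match T.bo q with
    | none => 1
    | some q' => c.pphi q / c.d q q' * c.alphaN n q'

/-- The induced distribution `p*(x|q) = α(q,q^x)·p(x|q^x)` for `x ∈ L*[q]`, else `0`. -/
def pStar (c : Companion T ε) (q : Q) (x : α) : ℝ :=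
  if h : ∃ n, ∃ q', T.iter n q = some q' ∧ x ∈ T.supp q'
  then c.alphaN (Nat.find h) q * c.p ((T.iter (Nat.find h) q).getD q) x
  else 0

end Companion

/-- `C(x,q) = Σ_{q_a ∈ B(q)} c(x,q_a)·1[q_a^x = q]` for `x ∈ Σ`. -/
def Cx [Fintype Q] (T : BackoffTopology α Q) (c : α → Q → ℝ) (x : α) (q : Q) : ℝ :=
  ∑ qa ∈ T.B q, if T.qx qa x = some q then c x qa else 0

/-- `C(φ,q) = Σ_{q_a ∈ B(q)} Σ_{x ∉ L[q]} c(x,q_a)`. -/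
def Cphi [Fintype α] [Fintype Q] (T : BackoffTopology α Q) (c : α → Q → ℝ) (q : Q) : ℝ :=
  ∑ qa ∈ T.B q, ∑ x : α, if x ∈ T.supp q then 0 else c x qa

section Aux

variable {α : Type*} {Q : Type*}

lemma iter_succ' (T : BackoffTopology α Q) (n : ℕ) (q : Q) :
    T.iter (n + 1) q = (T.bo q).bind (T.iter n) := by
  induction n generalizing q with
  | zero =>
    show (T.iter 0 q).bind T.bo = _
    cases hb : T.bo q <;> simp [BackoffTopology.iter, hb]
  | succ n ih =>
    show (T.iter (n + 1) q).bind T.bo = _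
    rw [ih]
    cases hb : T.bo q with
    | none => simp
    | some q' =>
      simp only [Option.bind_some]
      rfl

lemma d_ge_eps {T : BackoffTopology α Q} {ε : ℝ} (hε : 0 < ε) (c : Companion T ε)
    (q₀ q : Q) (h : T.bo q₀ = some q) : ε ≤ c.d q₀ q := by
  have hsub := T.supp_sub q₀ q h
  have htot := c.total q
  unfold Companion.d
  cases hbq : T.bo q with
  | some q' =>
    have h1 : ∑ x ∈ T.supp q₀, c.p q x ≤ ∑ x ∈ T.supp q, c.p q x :=
      Finset.sum_le_sum_of_subset_of_nonneg hsub
        (fun x hx _ => le_trans hε.le (c.p_ge q x hx))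
    have h2 := c.pphi_ge q q' hbq
    linarith
  | none =>
    have hss := T.supp_ssub q₀ q h hbq
    obtain ⟨x, hxq, hxq₀⟩ := Finset.exists_of_ssubset hss
    have hp0 := c.pphi_none q hbq
    have hsub' : T.supp q₀ ⊆ (T.supp q).erase x := by
      intro y hy
      exact Finset.mem_erase.2 ⟨fun hyx => hxq₀ (hyx ▸ hy), hsub hy⟩
    have h1 : ∑ y ∈ T.supp q₀, c.p q y ≤ ∑ y ∈ (T.supp q).erase x, c.p q y :=
      Finset.sum_le_sum_of_subset_of_nonneg hsub'
        (fun y hy _ => le_trans hε.le (c.p_ge q y (Finset.mem_of_mem_erase hy)))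
    have h2 : ∑ y ∈ (T.supp q).erase x, c.p q y + c.p q x = ∑ y ∈ T.supp q, c.p q y :=
      Finset.sum_erase_add _ _ hxq
    have h3 := c.p_ge q x hxq
    linarith

lemma pStar_of_mem_supp {T : BackoffTopology α Q} {ε : ℝ} (c : Companion T ε)
    (q : Q) (x : α) (hx : x ∈ T.supp q) : c.pStar q x = c.p q x := by
  have h : ∃ n, ∃ q', T.iter n q = some q' ∧ x ∈ T.supp q' := ⟨0, q, rfl, hx⟩
  rw [Companion.pStar, dif_pos h]
  have h0 : Nat.find h = 0 :=
    Nat.eq_zero_of_le_zero (Nat.find_le ⟨q, rfl, hx⟩)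
  rw [h0]
  simp [BackoffTopology.iter, Companion.alphaN]

lemma pStar_step {T : BackoffTopology α Q} {ε : ℝ} (c : Companion T ε)
    {q q' : Q} (hb : T.bo q = some q') (x : α) (hx : x ∉ T.supp q)
    (h' : ∃ n, ∃ s, T.iter n q' = some s ∧ x ∈ T.supp s) :
    c.pStar q x = c.pphi q / c.d q q' * c.pStar q' x := by
  have hshift : ∀ n, T.iter (n + 1) q = T.iter n q' := by
    intro n; rw [iter_succ', hb]; rfl
  have h : ∃ n, ∃ s, T.iter n q = some s ∧ x ∈ T.supp s := by
    obtain ⟨n, s, hs, hxs⟩ := h'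
    exact ⟨n + 1, s, by rw [hshift]; exact hs, hxs⟩
  rw [Companion.pStar, dif_pos h, Companion.pStar, dif_pos h']
  have hne : Nat.find h ≠ 0 := by
    intro h0
    obtain ⟨s, hs, hxs⟩ := h0 ▸ Nat.find_spec h
    have hq : q = s := by simpa [BackoffTopology.iter] using hs
    exact hx (hq ▸ hxs)
  have hfind : Nat.find h = Nat.find h' + 1 := by
    refine le_antisymm ?_ ?_
    · obtain ⟨s, hs, hxs⟩ := Nat.find_spec h'
      exact Nat.find_le ⟨s, by rw [hshift]; exact hs, hxs⟩
    · obtain ⟨m, hm⟩ := Nat.exists_eq_succ_of_ne_zero hne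
      obtain ⟨s, hs, hxs⟩ := hm ▸ Nat.find_spec h
      rw [hshift] at hs
      have : Nat.find h' ≤ m := Nat.find_le ⟨s, hs, hxs⟩
      omega
  rw [hfind]
  obtain ⟨s, hs, hxs⟩ := Nat.find_spec h'
  rw [hshift, hs]
  simp only [Companion.alphaN, hb, Option.getD_some]
  ring

lemma suppStar_of_bo {T : BackoffTopology α Q} {q q' : Q} (hb : T.bo q = some q') :
    T.suppStar q = T.suppStar q' := by
  ext x
  constructor
  · rintro ⟨n, s, hs, hxs⟩
    cases n with
    | zero =>
      have hq : q = s := by simpa [BackoffTopology.iter] using hs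
      subst hq
      exact ⟨0, q', rfl, T.supp_sub q q' hb hxs⟩
    | succ n =>
      rw [iter_succ', hb] at hs
      exact ⟨n, s, hs, hxs⟩
  · rintro ⟨n, s, hs, hxs⟩
    refine ⟨n + 1, s, ?_, hxs⟩
    rw [iter_succ', hb]; exact hs

lemma suppStar_of_none {T : BackoffTopology α Q} {q : Q} (hb : T.bo q = none) :
    T.suppStar q = ↑(T.supp q) := by
  ext x
  constructor
  · rintro ⟨n, s, hs, hxs⟩
    cases n with
    | zero =>
      have hq : q = s := by simpa [BackoffTopology.iter] using hs
      subst hq; exact hxs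
    | succ n =>
      rw [iter_succ', hb] at hs
      simp at hs
  · intro hx
    exact ⟨0, q, rfl, hx⟩

lemma sum_pStar_eq_one [Fintype α] {T : BackoffTopology α Q} {ε : ℝ} (hε : 0 < ε)
    (c : Companion T ε) :
    ∀ n (q : Q), T.rank q ≤ n →
      ∑ x ∈ Finset.univ.filter (fun x : α => x ∈ T.suppStar q), c.pStar q x = 1 := by
  have base : ∀ q : Q, T.bo q = none →
      ∑ x ∈ Finset.univ.filter (fun x : α => x ∈ T.suppStar q), c.pStar q x = 1 := by
    intro q hb
    have hset : Finset.univ.filter (fun x : α => x ∈ T.suppStar q) = T.supp q := by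
      ext x
      simp [suppStar_of_none hb]
    rw [hset, Finset.sum_congr rfl (fun x hx => pStar_of_mem_supp c q x hx)]
    have h1 := c.total q
    have h2 := c.pphi_none q hb
    linarith
  intro n
  induction n with
  | zero =>
    intro q hq
    cases hb : T.bo q with
    | none => exact base q hb
    | some q' =>
      have := T.rank_lt q q' hb
      omega
  | succ n ih =>
    intro q hq
    cases hb : T.bo q with
    | none => exact base q hb
    | some q' =>
      have hr : T.rank q' ≤ n := by have := T.rank_lt q q' hb; omega
      have hih := ih q' hr
      have hset : Finset.univ.filter (fun x : α => x ∈ T.suppStar q)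
          = Finset.univ.filter (fun x : α => x ∈ T.suppStar q') := by
        rw [suppStar_of_bo hb]
      set S := Finset.univ.filter (fun x : α => x ∈ T.suppStar q') with hS
      have hsubS : T.supp q ⊆ S := by
        intro x hx
        simp only [hS, Finset.mem_filter, Finset.mem_univ, true_and]
        exact ⟨0, q', rfl, T.supp_sub q q' hb hx⟩
      have hd : c.d q q' ≠ 0 := by
        have := d_ge_eps hε c q q' hb; linarith
      have hsum2 : ∑ x ∈ T.supp q, c.pStar q x = 1 - c.pphi q := by
        rw [Finset.sum_congr rfl (fun x hx => pStar_of_mem_supp c q x hx)]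
        have := c.total q; linarith
      have hsum2' : ∑ x ∈ T.supp q, c.pStar q' x = ∑ x ∈ T.supp q, c.p q' x :=
        Finset.sum_congr rfl
          (fun x hx => pStar_of_mem_supp c q' x (T.supp_sub q q' hb hx))
      have hsdiff : ∑ x ∈ S \ T.supp q, c.pStar q' x = c.d q q' := by
        have hsd := Finset.sum_sdiff (f := c.pStar q') hsubS
        rw [hih, hsum2'] at hsd
        unfold Companion.d
        linarith
      have hstep : ∀ x ∈ S \ T.supp q,
          c.pStar q x = c.pphi q / c.d q q' * c.pStar q' x := by
        intro x hx
        obtain ⟨hxS, hxn⟩ := Finset.mem_sdiff.1 hx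
        exact pStar_step c hb x hxn ((Finset.mem_filter.1 hxS).2)
      rw [hset, ← Finset.sum_sdiff hsubS, Finset.sum_congr rfl hstep,
        ← Finset.mul_sum, hsdiff, hsum2, div_mul_cancel₀ _ hd]
      ring

end Aux

/-- For every backoff-complete topology and every ε-companion distribution,
the induced distribution is a probability distribution at every state; in particular every
denominator `d(q₀,q)` is at least `ε > 0`. -/
theorem pStar_sum_one [Fintype α] [Fintype Q] (T : BackoffTopology α Q)
    {ε : ℝ} (hε : 0 < ε) (c : Companion T ε) :
    (∀ q₀ q : Q, T.bo q₀ = some q → ε ≤ c.d q₀ q) ∧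
    (∀ q : Q,
      ∑ x ∈ Finset.univ.filter (fun x : α => x ∈ T.suppStar q), c.pStar q x = 1) := by
  exact ⟨d_ge_eps hε c, fun q => sum_pStar_eq_one hε c (T.rank q) q le_rfl⟩

end
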